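/- arXiv:0801.3001 — 2 statements merged into one kernel-verified Lean document; each statement's English description precedes it below -/
import Mathlib

section
/- In the permanent linear price impact model with price $p_t = p_{t-1} + \lambda u_t + \epsilon_t$, among all deterministic trading schedules $(u_1,\ldots,u_T)$ with $\sum_{t=1}^T u_t = -x_0$, the expected execution cost $\lambda\big(x_0^2/2 + \tfrac{1}{2}\sum_{t=1}^T u_t^2\big)$ is minimized uniquely by the equipartitioning schedule $u_t = -x_0/T$, giving minimum expected cost $\lambda x_0^2 (T+1)/(2T)$. -/
open Finset

lemma sum_sq_decomp (T : ℕ) (hT : 1 ≤ T) (x0 : ℝ) (u : Fin T → ℝ)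
    (hsum : (∑ t, u t) = -x0) :
    ∑ t, (u t) ^ 2 = x0 ^ 2 / T + ∑ t, (u t + x0 / T) ^ 2 := by
  have hT0 : (T : ℝ) ≠ 0 := by positivity
  have : ∑ t, (u t + x0 / T) ^ 2
      = ∑ t, (u t) ^ 2 + (2 * (x0 / T)) * (∑ t, u t) + T * (x0 / T) ^ 2 := by
    rw [show (∑ t, (u t + x0 / T) ^ 2)
        = ∑ t, ((u t) ^ 2 + (2 * (x0 / T)) * u t + (x0 / T) ^ 2) from
      Finset.sum_congr rfl fun t _ => by ring]
    rw [Finset.sum_add_distrib, Finset.sum_add_distrib, ← Finset.mul_sum,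
      Finset.sum_const, Finset.card_univ, Fintype.card_fin, nsmul_eq_mul]
  have key : (T:ℝ) * (x0 / T) ^ 2 = x0 ^ 2 / T := by
    field_simp
  rw [this, hsum, key]
  ring

/-- Among deterministic schedules summing to `-x0`, expected execution cost
`lam*(x0^2/2 + (1/2)∑ u t^2)` is uniquely minimized by equipartitioning
`u t = -x0/T`, with minimum value `lam*x0^2*(T+1)/(2T)`. -/
theorem equipartition_minimizes_cost
    (T : ℕ) (hT : 1 ≤ T) (lam x0 : ℝ) (hlam : 0 < lam) :
    let cost : (Fin T → ℝ) → ℝ :=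
      fun u => lam * (x0 ^ 2 / 2 + (1 / 2) * ∑ t, (u t) ^ 2)
    (∀ u : Fin T → ℝ, (∑ t, u t) = -x0 →
        lam * x0 ^ 2 * (T + 1) / (2 * T) ≤ cost u) ∧
    cost (fun _ => -x0 / T) = lam * x0 ^ 2 * (T + 1) / (2 * T) ∧
    (∀ u : Fin T → ℝ, (∑ t, u t) = -x0 →
        cost u = lam * x0 ^ 2 * (T + 1) / (2 * T) → u = fun _ => -x0 / T) := by
  intro cost
  have hT0 : (0:ℝ) < T := by exact_mod_cast hT
  have hmin : lam * x0 ^ 2 * (T + 1) / (2 * T)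
      = lam * (x0 ^ 2 / 2 + (1 / 2) * (x0 ^ 2 / T)) := by
    field_simp
  refine ⟨?_, ?_, ?_⟩
  · intro u hu
    have h := Finset.sum_nonneg (fun t (_ : t ∈ Finset.univ) => sq_nonneg (u t + x0 / T))
    show lam * x0 ^ 2 * (T + 1) / (2 * T)
      ≤ lam * (x0 ^ 2 / 2 + (1 / 2) * ∑ t, (u t) ^ 2)
    rw [sum_sq_decomp T hT x0 u hu, hmin]; nlinarith
  · show lam * (x0 ^ 2 / 2 + (1 / 2) * ∑ _t : Fin T, (-x0 / T) ^ 2)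
      = lam * x0 ^ 2 * (T + 1) / (2 * T)
    rw [Finset.sum_const, Finset.card_univ, Fintype.card_fin, nsmul_eq_mul, hmin]
    field_simp
  · intro u hu heq
    rw [show cost u = lam * (x0 ^ 2 / 2 + (1 / 2) * ∑ t, (u t) ^ 2) from rfl,
      sum_sq_decomp T hT x0 u hu, hmin] at heq
    have hz : ∑ t, (u t + x0 / T) ^ 2 = 0 := by
      have := mul_left_cancel₀ (ne_of_gt hlam) heq
      nlinarith
    funext t
    have := (Finset.sum_eq_zero_iff_of_nonneg
      (fun t (_ : t ∈ Finset.univ) => sq_nonneg (u t + x0 / T))).mp hz t (Finset.mem_univ t)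
    have h2 : u t + x0 / T = 0 := by
      exact pow_eq_zero_iff (n := 2) (by norm_num) |>.mp this
    rw [show (-x0 / (T:ℝ)) = -(x0 / T) from neg_div _ _]
    linarith
end

section
/- An arbitrageur with position $y_{T-1}$ who must liquidate over two periods $T$ and $T+1$ under the price impact model, where the trader sells $-x_{T-1}$ at time $T$ with $x_{T-1}$ distributed according to belief $\phi_{T-1}$ with mean $\mu_{T-1}$, has optimal first trade $v_T^* = -y_{T-1}/2$ and optimal expected profit $V^*_{T-1}(y_{T-1},\phi_{T-1}) = -\lambda(\mu_{T-1} + \tfrac{3}{4} y_{T-1}) y_{T-1}$. -/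
open MeasureTheory

/-- Terminal-stage arbitrageur problem: optimal first trade is `-y/2` with
optimal expected profit `-lam*(m + (3/4)*y)*y`. -/
theorem arbitrageur_terminal_value
    {Ω : Type*} [MeasurableSpace Ω] (μ : Measure Ω) [IsProbabilityMeasure μ]
    (lam y m : ℝ) (hlam : 0 < lam)
    (x : Ω → ℝ) (hx : Integrable x μ) (hm : ∫ ω, x ω ∂μ = m)
    (h : ℝ → ℝ)
    (hh : ∀ v, h v = ∫ ω, (lam * (-(x ω) + v) * y - lam * (y + v) ^ 2) ∂μ) :
    (∀ v, h v ≤ h (-y / 2)) ∧ h (-y / 2) = -lam * (m + (3 / 4) * y) * y := by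
  have key : ∀ v, h v = -lam * y * m + (lam * v * y - lam * (y + v) ^ 2) := by
    intro v
    rw [hh v]
    have : ∀ ω, lam * (-(x ω) + v) * y - lam * (y + v) ^ 2
        = (-lam * y) * x ω + (lam * v * y - lam * (y + v) ^ 2) := by
      intro ω; ring
    simp_rw [this]
    rw [integral_add (hx.const_mul _) (integrable_const _), MeasureTheory.integral_const_mul,
      integral_const, hm]
    simp
  constructor
  · intro v
    rw [key v, key (-y/2)]
    have : (-lam * y * m + (lam * (-y/2) * y - lam * (y + -y/2) ^ 2))
        - (-lam * y * m + (lam * v * y - lam * (y + v) ^ 2))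
        = lam * (v + y/2) ^ 2 := by ring
    nlinarith [sq_nonneg (v + y/2), mul_nonneg hlam.le (sq_nonneg (v + y/2))]
  · rw [key (-y/2)]; ring
end
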